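/- (Lower bound on error-correction capability of concatenated codes, single-level case.) With the concatenated code C as above, fix for each ℓ a vector v_ℓ ∈ F_q^{n_ℓ} with w_H(v_ℓ) = d_H(B_ℓ), and let V = {(u_1 v_1, ..., u_m v_m) : u ∈ {0,1}^m, w_H(u) = d_H(A)}. Then t_λ(C) ≥ min_{v ∈ V} τ_λ(v). -/

import Mathlib

variable {F : Type} [Field F] [Fintype F] [DecidableEq F]

/-- Weighted-Hamming weight of a block-partitioned vector. -/
def wL {m : ℕ} (n : Fin m → ℕ) (lam : Fin m → ℕ) (a : ∀ ℓ, Fin (n ℓ) → F) : ℕ :=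
  ∑ ℓ, lam ℓ * hammingNorm (a ℓ)

/-- `τ_λ(c) + 1`: minimum over `r` of `max {w_λ(r), w_λ(c − r)}`. -/
noncomputable def tauAux {m : ℕ} (n lam : Fin m → ℕ) (c : ∀ ℓ, Fin (n ℓ) → F) : ℕ :=
  sInf {x | ∃ r : ∀ ℓ, Fin (n ℓ) → F, x = max (wL n lam r) (wL n lam (c - r))}

/-- Error-correction radius `τ_λ(c)`. -/
noncomputable def tau {m : ℕ} (n lam : Fin m → ℕ) (c : ∀ ℓ, Fin (n ℓ) → F) : ℕ :=
  tauAux n lam c - 1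

/-- Weighted-Hamming ball of radius `t`. -/
def ball {m : ℕ} (n lam : Fin m → ℕ) (t : ℕ) : Set (∀ ℓ, Fin (n ℓ) → F) :=
  {x | wL n lam x ≤ t}

/-- Difference set of the weighted-Hamming ball of radius `t`. -/
def dball {m : ℕ} (n lam : Fin m → ℕ) (t : ℕ) : Set (∀ ℓ, Fin (n ℓ) → F) :=
  {z | ∃ x ∈ ball n lam t, ∃ y ∈ ball n lam t, z = x - y}

/-- Minimum weighted-Hamming distance of a linear code. -/
noncomputable def dL {m : ℕ} (n lam : Fin m → ℕ) (C : Submodule F (∀ ℓ, Fin (n ℓ) → F)) : ℕ :=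
  sInf {x | ∃ c ∈ C, c ≠ 0 ∧ x = wL n lam c}

/-- Error-correction capability of a linear code. -/
noncomputable def tL {m : ℕ} (n lam : Fin m → ℕ) (C : Submodule F (∀ ℓ, Fin (n ℓ) → F)) : ℕ :=
  sInf {x | ∃ c ∈ C, c ≠ 0 ∧ x = tau n lam c}

section Concatenated

variable {m : ℕ} (nn md lam : Fin m → ℕ)
variable (enc : ∀ ℓ, (Fin (md ℓ) → F) →ₗ[F] (Fin (nn ℓ) → F))
variable (A : Submodule F (∀ ℓ, Fin (md ℓ) → F))

/-- The concatenated code `C = {(enc_1(a_1), …, enc_m(a_m)) : a ∈ A}`. -/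
def ccode : Set (∀ ℓ, Fin (nn ℓ) → F) :=
  {c | ∃ a ∈ A, c = fun ℓ => enc ℓ (a ℓ)}

/-- Minimum (block-symbol) Hamming distance of the polyalphabetic outer code `A`. -/
noncomputable def dHA : ℕ :=
  sInf {x | ∃ a ∈ A, a ≠ 0 ∧ x = (Finset.univ.filter fun ℓ => a ℓ ≠ 0).card}

/-- Minimum Hamming distance of the inner code `B_ℓ = range (enc ℓ)`. -/
noncomputable def dHB (ℓ : Fin m) : ℕ :=
  sInf {x | ∃ v ∈ Set.range (enc ℓ), v ≠ 0 ∧ x = hammingNorm v}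

/-- Minimum weighted-Hamming distance of a (not necessarily linear) set of vectors. -/
noncomputable def dLset (S : Set (∀ ℓ, Fin (nn ℓ) → F)) : ℕ :=
  sInf {x | ∃ c ∈ S, c ≠ 0 ∧ x = wL nn lam c}

/-- Error-correction capability of a set of vectors. -/
noncomputable def tLset (S : Set (∀ ℓ, Fin (nn ℓ) → F)) : ℕ :=
  sInf {x | ∃ c ∈ S, c ≠ 0 ∧ x = tau nn lam c}

/-- Sum of the `d_H(A)` smallest values among `{λ_ℓ · d_H(B_ℓ)}`
(i.e. `σ_1 + … + σ_{d_H(A)}` for the sorted sequence `σ_1 ≤ … ≤ σ_m`). -/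
noncomputable def sortedSum : ℕ :=
  (((Finset.univ.val.map fun ℓ => lam ℓ * dHB nn md enc ℓ).sort (· ≤ ·)).take
    (dHA md A)).sum

end Concatenated

/-- Per-block splitting lemma: a vector of Hamming weight at most `a + b` can be split
into a sum of a vector of weight at most `a` and one of weight at most `b`. -/
lemma split_block {n : ℕ} (v : Fin n → F) (a b : ℕ) (h : hammingNorm v ≤ a + b) :
    ∃ r : Fin n → F, hammingNorm r ≤ a ∧ hammingNorm (v - r) ≤ b := by
  classical
  set S : Finset (Fin n) := Finset.univ.filter (fun i => v i ≠ 0) with hS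
  have hcard : S.card = hammingNorm v := rfl
  obtain ⟨T, hTS, hTcard⟩ := Finset.exists_subset_card_eq (s := S) (n := min S.card a) (min_le_left _ _)
  refine ⟨fun i => if i ∈ T then v i else 0, ?_, ?_⟩
  · calc hammingNorm (fun i => if i ∈ T then v i else 0) ≤ T.card := by
          apply Finset.card_le_card
          intro i hi
          simp only [hammingNorm, Finset.mem_filter, Finset.mem_univ, true_and] at hi
          by_contra hiT
          simp [hiT] at hi
        _ ≤ a := by rw [hTcard]; exact min_le_right _ _
  · have hsub : Finset.univ.filter (fun i => (v - fun i => if i ∈ T then v i else 0) i ≠ 0)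
        ⊆ S \ T := by
      intro i hi
      simp only [Finset.mem_filter, Finset.mem_univ, true_and, Pi.sub_apply] at hi
      by_cases hiT : i ∈ T
      · simp [hiT] at hi
      · simp only [hiT, if_neg, ite_false, sub_zero] at hi
        exact Finset.mem_sdiff.2 ⟨Finset.mem_filter.2 ⟨Finset.mem_univ _, hi⟩, hiT⟩
    calc hammingNorm (v - fun i => if i ∈ T then v i else 0) ≤ (S \ T).card :=
          Finset.card_le_card hsub
      _ = S.card - T.card := Finset.card_sdiff_of_subset hTS
      _ ≤ b := by rw [hTcard, hcard] at *; omega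

/-- Monotonicity of `tauAux` under coordinatewise domination of block weights. -/
lemma tauAux_mono {m : ℕ} (n lam : Fin m → ℕ) (v c : ∀ ℓ, Fin (n ℓ) → F)
    (h : ∀ ℓ, hammingNorm (v ℓ) ≤ hammingNorm (c ℓ)) :
    tauAux n lam v ≤ tauAux n lam c := by
  classical
  have hne : {x | ∃ r : ∀ ℓ, Fin (n ℓ) → F,
      x = max (wL n lam r) (wL n lam (c - r))}.Nonempty := ⟨_, 0, rfl⟩
  obtain ⟨r, hr⟩ := Nat.sInf_mem hne
  have hsplit : ∀ ℓ, ∃ r' : Fin (n ℓ) → F,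
      hammingNorm r' ≤ hammingNorm (r ℓ) ∧
      hammingNorm (v ℓ - r') ≤ hammingNorm (c ℓ - r ℓ) := by
    intro ℓ
    apply split_block
    refine (h ℓ).trans ?_
    have : c ℓ = r ℓ + (c ℓ - r ℓ) := by ring
    calc hammingNorm (c ℓ) = hammingDist (r ℓ + (c ℓ - r ℓ)) 0 := by
          rw [← this, hammingDist_zero_right]
      _ ≤ hammingDist (r ℓ + (c ℓ - r ℓ)) (r ℓ) + hammingDist (r ℓ) 0 :=
          hammingDist_triangle _ _ _
      _ = hammingNorm (c ℓ - r ℓ) + hammingNorm (r ℓ) := by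
          rw [hammingDist_zero_right, hammingDist_eq_hammingNorm, show -(r ℓ + (c ℓ - r ℓ)) + r ℓ = -(c ℓ - r ℓ) by abel, show hammingNorm (-(c ℓ - r ℓ)) = hammingNorm (c ℓ - r ℓ) by simp [hammingNorm, sub_eq_zero, eq_comm]]
      _ = hammingNorm (r ℓ) + hammingNorm (c ℓ - r ℓ) := by ring
  choose r' hr1 hr2 using hsplit
  have h1 : wL n lam r' ≤ wL n lam r :=
    Finset.sum_le_sum fun ℓ _ => Nat.mul_le_mul_left _ (hr1 ℓ)
  have h2 : wL n lam (v - r') ≤ wL n lam (c - r) :=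
    Finset.sum_le_sum fun ℓ _ => Nat.mul_le_mul_left _ (hr2 ℓ)
  calc tauAux n lam v ≤ max (wL n lam r') (wL n lam (v - r')) := Nat.sInf_le ⟨r', rfl⟩
    _ ≤ max (wL n lam r) (wL n lam (c - r)) := max_le_max h1 h2
    _ = tauAux n lam c := hr.symm

lemma tau_mono {m : ℕ} (n lam : Fin m → ℕ) (v c : ∀ ℓ, Fin (n ℓ) → F)
    (h : ∀ ℓ, hammingNorm (v ℓ) ≤ hammingNorm (c ℓ)) :
    tau n lam v ≤ tau n lam c :=
  Nat.sub_le_sub_right (tauAux_mono n lam v c h) 1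

lemma tau_zero {m : ℕ} (n lam : Fin m → ℕ) :
    tau n lam (0 : ∀ ℓ, Fin (n ℓ) → F) = 0 := by
  have : tauAux n lam (0 : ∀ ℓ, Fin (n ℓ) → F) ≤ 0 := by
    have : (0 : ℕ) ∈ {x | ∃ r : ∀ ℓ, Fin (n ℓ) → F,
        x = max (wL n lam r) (wL n lam ((0 : ∀ ℓ, Fin (n ℓ) → F) - r))} := by
      refine ⟨0, ?_⟩
      simp [wL, hammingNorm_zero]
    exact Nat.sInf_le this
  simp [tau, Nat.le_zero.mp this]

/-- lower bound on the error-correction capability of concatenated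
codes: `t_λ(C) ≥ min_{v ∈ V} τ_λ(v)` where `V` consists of the vectors obtained by
placing a fixed minimum-weight inner codeword pattern `v_ℓ` on `d_H(A)` blocks. -/
theorem concat_tau_bound {m : ℕ} (nn md lam : Fin m → ℕ)
    (enc : ∀ ℓ, (Fin (md ℓ) → F) →ₗ[F] (Fin (nn ℓ) → F))
    (hinj : ∀ ℓ, Function.Injective (enc ℓ))
    (A : Submodule F (∀ ℓ, Fin (md ℓ) → F))
    (vfix : ∀ ℓ, Fin (nn ℓ) → F)
    (hv : ∀ ℓ, hammingNorm (vfix ℓ) = dHB nn md enc ℓ) :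
    sInf {x | ∃ u : Fin m → Bool,
        (Finset.univ.filter fun ℓ => u ℓ = true).card = dHA md A ∧
        x = tau nn lam (fun ℓ => if u ℓ then vfix ℓ else 0)} ≤
      tLset nn lam (ccode nn md enc A) := by
  classical
  by_cases hne : {x | ∃ c ∈ ccode nn md enc A, c ≠ 0 ∧ x = tau nn lam c}.Nonempty
  · obtain ⟨c, hc, hc0, heq⟩ := Nat.sInf_mem hne
    obtain ⟨a, ha, rfl⟩ := hc
    have ha0 : a ≠ 0 := by
      rintro rfl
      apply hc0
      funext ℓ
      simp
    have hdA : dHA md A ≤ (Finset.univ.filter fun ℓ => a ℓ ≠ 0).card :=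
      Nat.sInf_le ⟨a, ha, ha0, rfl⟩
    obtain ⟨T, hTsub, hTcard⟩ :=
      Finset.exists_subset_card_eq (s := Finset.univ.filter fun ℓ => a ℓ ≠ 0) (n := dHA md A) hdA
    set u : Fin m → Bool := fun ℓ => decide (ℓ ∈ T) with hu
    have hufil : (Finset.univ.filter fun ℓ => u ℓ = true) = T := by
      ext ℓ; simp [hu]
    have hdom : ∀ ℓ, hammingNorm ((fun ℓ => if u ℓ then vfix ℓ else 0) ℓ)
        ≤ hammingNorm (enc ℓ (a ℓ)) := by
      intro ℓ
      by_cases hℓ : ℓ ∈ T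
      · have haℓ : a ℓ ≠ 0 := (Finset.mem_filter.1 (hTsub hℓ)).2
        have hene : enc ℓ (a ℓ) ≠ 0 := by
          intro h0
          exact haℓ (hinj ℓ (by rw [h0, map_zero]))
        have : dHB nn md enc ℓ ≤ hammingNorm (enc ℓ (a ℓ)) :=
          Nat.sInf_le ⟨enc ℓ (a ℓ), ⟨a ℓ, rfl⟩, hene, rfl⟩
        simpa [hu, hℓ, hv ℓ] using this
      · simp [hu, hℓ, hammingNorm_zero]
    calc sInf {x | ∃ u : Fin m → Bool,
          (Finset.univ.filter fun ℓ => u ℓ = true).card = dHA md A ∧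
          x = tau nn lam (fun ℓ => if u ℓ then vfix ℓ else 0)}
        ≤ tau nn lam (fun ℓ => if u ℓ then vfix ℓ else 0) :=
          Nat.sInf_le ⟨u, by rw [hufil]; exact hTcard, rfl⟩
      _ ≤ tau nn lam (fun ℓ => enc ℓ (a ℓ)) := tau_mono _ _ _ _ hdom
      _ = tLset nn lam (ccode nn md enc A) := heq.symm
  · -- the code has no nonzero codeword, so `A = 0` and `dHA = 0`
    have hAzero : ∀ a ∈ A, a = 0 := by
      intro a ha
      by_contra ha0
      apply hne
      refine ⟨tau nn lam (fun ℓ => enc ℓ (a ℓ)), _, ⟨a, ha, rfl⟩, ?_, rfl⟩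
      intro h0
      apply ha0
      funext ℓ
      apply hinj ℓ
      simpa using congrFun h0 ℓ
    have hdA0 : dHA md A = 0 := by
      have : {x | ∃ a ∈ A, a ≠ 0 ∧ x = (Finset.univ.filter fun ℓ => a ℓ ≠ 0).card} = ∅ := by
        ext x
        simp only [Set.mem_setOf_eq, Set.mem_empty_iff_false, iff_false]
        rintro ⟨a, ha, ha0, -⟩
        exact ha0 (hAzero a ha)
      rw [dHA, this, Nat.sInf_empty]
    have h0mem : (0 : ℕ) ∈ {x | ∃ u : Fin m → Bool,
          (Finset.univ.filter fun ℓ => u ℓ = true).card = dHA md A ∧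
          x = tau nn lam (fun ℓ => if u ℓ then vfix ℓ else 0)} := by
      refine ⟨fun _ => false, by simp [hdA0], ?_⟩
      have : (fun ℓ => if (false : Bool) then vfix ℓ else 0)
          = (0 : ∀ ℓ, Fin (nn ℓ) → F) := by funext ℓ; simp
      rw [this, tau_zero]
    have hT : tLset nn lam (ccode nn md enc A) = 0 := by
      rw [tLset, Set.not_nonempty_iff_eq_empty.mp hne, Nat.sInf_empty]
    rw [hT]
    exact Nat.sInf_le h0mem
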